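/- Let α ∈ (0,1). If α is irrational with by-excess characteristic sequence a₁a₂a₃⋯ of α−1, then α = [0; a₁, a₂, a₃, …] (regular continued fraction). Concretely: if α−1 has by-excess expansion (all partial maps x ↦ −1/x − d with d ≥ 2) encoded as (−1:2)^{a₁−1}(−1:2+a₂)(−1:2)^{a₃−1}(−1:2+a₄)⋯, then the RCF partial quotients of α are exactly a₁, a₂, a₃, …. -/

import Mathlib

/-- The digit of x under the α-continued fraction map: d_α(x) = ⌊|1/x| + 1 − α⌋.
For α = 0 this is the by-excess digit. -/
noncomputable def dCF (α x : ℝ) : ℤ := ⌊|1/x| + 1 - α⌋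

/-- The α-continued fraction map T_α; for α = 0 this is the by-excess map on [−1,0). -/
noncomputable def TCF (α x : ℝ) : ℝ := if x = 0 then 0 else |1/x| - ⌊|1/x| + 1 - α⌋

/-- The Gauss map (regular continued fraction map). -/
noncomputable def gaussMap (x : ℝ) : ℝ := if x = 0 then 0 else Int.fract (1/x)

/-- Starting position of the k-th block of the by-excess digit string associated to the
characteristic sequence a (0-indexed: a n is a_{n+1}); block k consists of a(2k)−1
digits (−1:2) followed by one digit (−1:2+a(2k+1)), so it has length a(2k). -/
def blockStart (a : ℕ → ℕ) (k : ℕ) : ℕ := ∑ i ∈ Finset.range k, a (2 * i)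

/-- `a` (a sequence of positive integers) is the characteristic sequence of x:
the by-excess expansion of x is (−1:2)^{a₁−1}(−1:2+a₂)(−1:2)^{a₃−1}(−1:2+a₄)⋯. -/
def IsCharSeq (x : ℝ) (a : ℕ → ℕ) : Prop :=
  (∀ n, 1 ≤ a n) ∧
  (∀ k j : ℕ, j + 1 < a (2 * k) →
    dCF 0 ((TCF 0)^[blockStart a k + j] x) = 2) ∧
  (∀ k : ℕ,
    dCF 0 ((TCF 0)^[blockStart a k + (a (2 * k) - 1)] x) = 2 + (a (2 * k + 1) : ℤ))

lemma gauss_step {x : ℝ} (hx : x ∈ Set.Ioo (0:ℝ) 1) (hirr : Irrational x) :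
    gaussMap x ∈ Set.Ioo (0:ℝ) 1 ∧ Irrational (gaussMap x) ∧ 1 ≤ ⌊1/x⌋ ∧
    gaussMap x = 1/x - ⌊1/x⌋ := by
  obtain ⟨hx0, hx1⟩ := hx
  have hne : x ≠ 0 := ne_of_gt hx0
  have h1x : 1 < 1/x := by
    rw [lt_one_div (by norm_num) hx0]; simpa using hx1
  have hinv : Irrational (1/x) := by simpa [one_div] using hirr.inv
  have hg : gaussMap x = 1/x - ⌊1/x⌋ := by
    rw [gaussMap, if_neg hne, Int.fract]
  have hfr : Irrational (gaussMap x) := by rw [hg]; exact hinv.sub_intCast _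
  have hge : 0 ≤ gaussMap x := by
    rw [hg]; have := Int.floor_le (1/x); linarith
  have h0 : 0 < gaussMap x :=
    lt_of_le_of_ne hge (by simpa using (hfr.ne_int 0).symm)
  have h1 : gaussMap x < 1 := by
    rw [hg]; have := Int.lt_floor_add_one (1/x); linarith
  have hA : 1 ≤ ⌊1/x⌋ := Int.le_floor.2 (by exact_mod_cast h1x.le)
  exact ⟨⟨h0, h1⟩, hfr, hA, hg⟩

lemma TCF0_neg {y : ℝ} (hy : y < 0) : TCF 0 y = -(1/y) - ⌊-(1/y) + 1⌋ := by
  have h : 1/y < 0 := one_div_neg.2 hy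
  rw [TCF, if_neg (ne_of_lt hy), abs_of_neg h, sub_zero]

lemma dCF0_neg {y : ℝ} (hy : y < 0) : dCF 0 y = ⌊-(1/y) + 1⌋ := by
  have h : 1/y < 0 := one_div_neg.2 hy
  rw [dCF, abs_of_neg h, sub_zero]

lemma floor_lt_one_div {x : ℝ} (hx0 : 0 < x) (hirr : Irrational x) :
    (⌊1/x⌋ : ℝ) < 1/x := by
  refine (Int.floor_le _).lt_of_ne fun h => ?_
  have : Irrational (1/x) := by simpa [one_div] using hirr.inv
  exact this.ne_int _ h.symm

lemma iter_formula {x : ℝ} (hx0 : 0 < x) :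
    ∀ j : ℕ, (j : ℝ) + 1 < 1/x →
    (TCF 0)^[j] (x - 1) = ((j+1) * x - 1)/(1 - j * x) := by
  intro j
  induction j with
  | zero => intro _; simp
  | succ j ih =>
    intro hj
    push_cast at hj ⊢
    have hj' : (j : ℝ) + 1 < 1/x := by linarith
    have h2x : ((j:ℝ)+2) * x < 1 := by
      have : ((j:ℝ)+2) * x < (1/x) * x := by
        apply mul_lt_mul_of_pos_right _ hx0; linarith
      rwa [one_div, inv_mul_cancel₀ (ne_of_gt hx0)] at this
    have hD2 : 0 < 1 - ((j:ℝ)+1) * x := by nlinarith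
    have hD : 0 < 1 - (j:ℝ) * x := by nlinarith
    have hN : ((j:ℝ)+1) * x - 1 < 0 := by linarith
    have hy : (TCF 0)^[j] (x-1) = (((j:ℝ)+1) * x - 1)/(1 - (j:ℝ) * x) := by
      have := ih hj'; push_cast at this; exact this
    set y : ℝ := (((j:ℝ)+1) * x - 1)/(1 - (j:ℝ) * x) with hydef
    have hyneg : y < 0 := div_neg_of_neg_of_pos hN hD
    have hr : -(1/y) = (1 - (j:ℝ)*x) / (1 - ((j:ℝ)+1)*x) := by
      rw [hydef]; field_simp [hN.ne]; ring
    have hr1 : 1 < -(1/y) := by rw [hr, lt_div_iff₀ hD2]; nlinarith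
    have hr2 : -(1/y) < 2 := by rw [hr, div_lt_iff₀ hD2]; linarith
    have hfl : ⌊-(1/y) + 1⌋ = 2 := by
      rw [Int.floor_eq_iff]; push_cast; constructor <;> linarith
    rw [Function.iterate_succ_apply', hy, TCF0_neg hyneg, hfl, hr]
    push_cast
    rw [div_sub' hD2.ne', div_left_inj' hD2.ne']
    ring

lemma digit_two {x : ℝ} (hx0 : 0 < x) (j : ℕ) (hj : (j:ℝ) + 2 < 1/x) :
    dCF 0 ((TCF 0)^[j] (x-1)) = 2 := by
  have hj' : (j : ℝ) + 1 < 1/x := by linarith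
  have h2x : ((j:ℝ)+2) * x < 1 := by
    have : ((j:ℝ)+2) * x < (1/x) * x := by
      apply mul_lt_mul_of_pos_right _ hx0; linarith
    rwa [one_div, inv_mul_cancel₀ (ne_of_gt hx0)] at this
  have hD2 : 0 < 1 - ((j:ℝ)+1) * x := by nlinarith
  have hD : 0 < 1 - (j:ℝ) * x := by nlinarith
  have hN : ((j:ℝ)+1) * x - 1 < 0 := by linarith
  have hy : (TCF 0)^[j] (x-1) = (((j:ℝ)+1) * x - 1)/(1 - (j:ℝ) * x) := by
    have := iter_formula hx0 j hj'; push_cast at this; exact this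
  set y : ℝ := (((j:ℝ)+1) * x - 1)/(1 - (j:ℝ) * x) with hydef
  have hyneg : y < 0 := div_neg_of_neg_of_pos hN hD
  have hr : -(1/y) = (1 - (j:ℝ)*x) / (1 - ((j:ℝ)+1)*x) := by
    rw [hydef]; field_simp [hN.ne]; ring
  have hr1 : 1 < -(1/y) := by rw [hr, lt_div_iff₀ hD2]; nlinarith
  have hr2 : -(1/y) < 2 := by rw [hr, div_lt_iff₀ hD2]; linarith
  rw [hy, dCF0_neg hyneg, Int.floor_eq_iff]
  push_cast; constructor <;> linarith

lemma block_end {x : ℝ} (hx : x ∈ Set.Ioo (0:ℝ) 1) (hirr : Irrational x) :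
    dCF 0 ((TCF 0)^[⌊1/x⌋.toNat - 1] (x-1)) = 2 + ⌊1/gaussMap x⌋ ∧
    (TCF 0)^[⌊1/x⌋.toNat] (x-1) = gaussMap^[2] x - 1 := by
  obtain ⟨hgIoo, hgirr, hA1, hgeq⟩ := gauss_step hx hirr
  obtain ⟨hgIoo2, hgirr2, hB1, hgeq2⟩ := gauss_step hgIoo hgirr
  set g : ℝ := gaussMap x with hgdef
  set A : ℤ := ⌊1/x⌋ with hAdef
  set B : ℤ := ⌊1/g⌋ with hBdef
  have hx0 := hx.1
  have hg0 := hgIoo.1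
  have hAx : (A:ℝ) < 1/x := floor_lt_one_div hx0 hirr
  have hAnat : ((A.toNat : ℤ) : ℝ) = (A:ℝ) := by
    rw [Int.toNat_of_nonneg (by omega)]
  have hAnat' : ((A.toNat : ℕ) : ℝ) = (A:ℝ) := by exact_mod_cast hAnat
  have h1A : 1 ≤ A.toNat := by omega
  have hcast : (((A.toNat - 1 : ℕ)) : ℝ) = (A:ℝ) - 1 := by
    push_cast [Nat.cast_sub h1A]; rw [hAnat']
  have hj' : (((A.toNat - 1 : ℕ)) : ℝ) + 1 < 1/x := by rw [hcast]; linarith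
  have hy : (TCF 0)^[A.toNat - 1] (x-1)
      = (((A:ℝ)-1+1) * x - 1)/(1 - ((A:ℝ)-1) * x) := by
    have := iter_formula hx0 _ hj'; rw [hcast] at this; exact this
  have hgx : g * x = 1 - (A:ℝ) * x := by
    rw [hgeq]; field_simp
  have hy2 : (TCF 0)^[A.toNat - 1] (x-1) = -g/(g+1) := by
    rw [hy]
    rw [div_eq_div_iff (by nlinarith) (by linarith)]
    nlinarith [hgx]
  set y : ℝ := (TCF 0)^[A.toNat - 1] (x-1) with hydef
  have hyneg : y < 0 := by rw [hy2]; apply div_neg_of_neg_of_pos <;> linarith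
  have hr : -(1/y) = 1/g + 1 := by
    rw [hy2]; field_simp [hg0.ne']; ring
  have hd : dCF 0 y = 2 + B := by
    rw [dCF0_neg hyneg, hr]
    have : 1/g + 1 + 1 = 1/g + ((2:ℤ):ℝ) := by push_cast; ring
    rw [this, Int.floor_add_intCast]; omega
  have hT : TCF 0 y = gaussMap g - 1 := by
    rw [TCF0_neg hyneg, hr, hgeq2]
    have : 1/g + 1 + 1 = 1/g + ((2:ℤ):ℝ) := by push_cast; ring
    rw [this, Int.floor_add_intCast]; push_cast; ring
  refine ⟨hd, ?_⟩
  have hsucc : A.toNat = (A.toNat - 1) + 1 := by omega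
  rw [hsucc, Function.iterate_succ_apply', ← hydef, hT]
  simp [Function.iterate_succ_apply', hgdef]

lemma key_step {x : ℝ} (hx : x ∈ Set.Ioo (0:ℝ) 1) (hirr : Irrational x)
    {m n : ℕ} (hm : 1 ≤ m) (hn : 1 ≤ n)
    (h2 : ∀ j : ℕ, j + 1 < m → dCF 0 ((TCF 0)^[j] (x-1)) = 2)
    (h3 : dCF 0 ((TCF 0)^[m - 1] (x-1)) = 2 + (n:ℤ)) :
    (m : ℤ) = ⌊1/x⌋ ∧ (n : ℤ) = ⌊1/gaussMap x⌋ ∧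
    (TCF 0)^[m] (x-1) = gaussMap^[2] x - 1 := by
  obtain ⟨hgIoo, hgirr, hA1, hgeq⟩ := gauss_step hx hirr
  obtain ⟨_, _, hB1, _⟩ := gauss_step hgIoo hgirr
  obtain ⟨hend, hnext⟩ := block_end hx hirr
  set A : ℤ := ⌊1/x⌋ with hAdef
  have hAx : (A:ℝ) < 1/x := floor_lt_one_div hx.1 hirr
  have hmA : m = A.toNat := by
    rcases lt_trichotomy ((m:ℤ)) A with h | h | h
    · exfalso
      have hd2 : dCF 0 ((TCF 0)^[m-1] (x-1)) = 2 := by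
        apply digit_two hx.1
        have h1 : ((m:ℝ)) + 1 ≤ (A:ℝ) := by exact_mod_cast (by omega : (m:ℤ) + 1 ≤ A)
        have h2 : (((m - 1 : ℕ)) : ℝ) = (m:ℝ) - 1 := by push_cast [Nat.cast_sub hm]; ring
        rw [h2]; linarith
      rw [hd2] at h3; omega
    · omega
    · exfalso
      have hj : A.toNat - 1 + 1 < m := by omega
      have := h2 (A.toNat - 1) hj
      rw [this] at hend; omega
  subst hmA
  refine ⟨by omega, ?_, hnext⟩
  rw [h3] at hend; omega

theorem charSeq_eq_RCF (α : ℝ) (hα : α ∈ Set.Ioo (0:ℝ) 1) (hirr : Irrational α)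
    (a : ℕ → ℕ) (ha : IsCharSeq (α - 1) a) :
    ∀ n : ℕ, ⌊1 / (gaussMap^[n] α)⌋ = (a n : ℤ) := by
  obtain ⟨hpos, h2, h3⟩ := ha
  have hQ : ∀ k : ℕ, (gaussMap^[2*k] α ∈ Set.Ioo (0:ℝ) 1) ∧ Irrational (gaussMap^[2*k] α) ∧
      (TCF 0)^[blockStart a k] (α - 1) = gaussMap^[2*k] α - 1 := by
    intro k
    induction k with
    | zero => exact ⟨by simpa using hα, by simpa using hirr, by simp [blockStart]⟩
    | succ k ih =>
      obtain ⟨hIoo, hkirr, hiter⟩ := ih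
      set x : ℝ := gaussMap^[2*k] α with hxdef
      have h2' : ∀ j : ℕ, j + 1 < a (2*k) → dCF 0 ((TCF 0)^[j] (x-1)) = 2 := by
        intro j hj
        have := h2 k j hj
        rwa [add_comm, Function.iterate_add_apply, hiter] at this
      have h3' : dCF 0 ((TCF 0)^[a (2*k) - 1] (x-1)) = 2 + (a (2*k+1) : ℤ) := by
        have := h3 k
        rwa [add_comm, Function.iterate_add_apply, hiter] at this
      obtain ⟨hmA, hnB, hT⟩ := key_step hIoo hkirr (hpos (2*k)) (hpos (2*k+1)) h2' h3'
      obtain ⟨hgIoo, hgirr, _, _⟩ := gauss_step hIoo hkirr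
      obtain ⟨hg2Ioo, hg2irr, _, _⟩ := gauss_step hgIoo hgirr
      have hiter2 : gaussMap^[2*(k+1)] α = gaussMap^[2] x := by
        rw [hxdef, ← Function.iterate_add_apply]
        congr 1; omega
      have hg2 : gaussMap^[2] x = gaussMap (gaussMap x) := by
        simp [Function.iterate_succ_apply']
      refine ⟨by rw [hiter2, hg2]; exact hg2Ioo, by rw [hiter2, hg2]; exact hg2irr, ?_⟩
      have hbs : blockStart a (k+1) = blockStart a k + a (2*k) := by
        rw [blockStart, blockStart, Finset.sum_range_succ]
      rw [hbs, add_comm, Function.iterate_add_apply, hiter, hT, hiter2]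
  have hE : ∀ k : ℕ, ((a (2*k) : ℤ) = ⌊1/gaussMap^[2*k] α⌋) ∧
      ((a (2*k+1) : ℤ) = ⌊1/gaussMap^[2*k+1] α⌋) := by
    intro k
    obtain ⟨hIoo, hkirr, hiter⟩ := hQ k
    set x : ℝ := gaussMap^[2*k] α with hxdef
    have h2' : ∀ j : ℕ, j + 1 < a (2*k) → dCF 0 ((TCF 0)^[j] (x-1)) = 2 := by
      intro j hj
      have := h2 k j hj
      rwa [add_comm, Function.iterate_add_apply, hiter] at this
    have h3' : dCF 0 ((TCF 0)^[a (2*k) - 1] (x-1)) = 2 + (a (2*k+1) : ℤ) := by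
      have := h3 k
      rwa [add_comm, Function.iterate_add_apply, hiter] at this
    obtain ⟨hmA, hnB, _⟩ := key_step hIoo hkirr (hpos (2*k)) (hpos (2*k+1)) h2' h3'
    refine ⟨hmA, ?_⟩
    rw [hnB]
    congr 2
    rw [Function.iterate_succ_apply']
  intro n
  rcases Nat.even_or_odd n with ⟨k, hk⟩ | ⟨k, hk⟩
  · have := (hE k).1
    rw [(by omega : n = 2*k)]
    exact this.symm
  · have := (hE k).2
    rw [(by omega : n = 2*k+1)]
    exact this.symm
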